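/- arXiv:0905.2155 — 3 statements merged into one kernel-verified Lean document; each statement's English description precedes it below -/
import Mathlib

section
/- For q > 0 and c ∈ ℝ, with H_q(x) = ∫₀^∞ e^{-xz - z²/2} z^{q-1} dz, one has ∫_c^∞ (e^{-x²/2}/√(2π)) · H_{2q}(x) dx = (e^{-c²/2}/(√(2π)·2q)) · H_{2q+1}(c). -/
open MeasureTheory Real Set Filter

/-- `H q x = ∫₀^∞ exp (-x z - z²/2) z^(q-1) dz`. -/
noncomputable def H (q x : ℝ) : ℝ :=
  ∫ z in Set.Ioi (0:ℝ), Real.exp (-x * z - z ^ 2 / 2) * z ^ (q - 1)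

namespace GaussianHAux

/-- The Gaussian tail function. -/
noncomputable def Φ (t : ℝ) : ℝ := ∫ u in Set.Ioi t, Real.exp (-u ^ 2 / 2)

lemma gauss_cont : Continuous fun u : ℝ => Real.exp (-u ^ 2 / 2) := by
  continuity

lemma gauss_int : Integrable fun u : ℝ => Real.exp (-u ^ 2 / 2) := by
  have h := integrable_exp_neg_mul_sq (b := (1:ℝ)/2) (by norm_num)
  rw [show (fun u : ℝ => Real.exp (-u ^ 2 / 2))
      = fun u : ℝ => Real.exp (-(1/2 : ℝ) * u ^ 2) from
    funext fun u => by rw [show -u ^ 2 / 2 = -(1/2 : ℝ) * u ^ 2 by ring]]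
  exact h

lemma Φ_nonneg (t : ℝ) : 0 ≤ Φ t :=
  setIntegral_nonneg measurableSet_Ioi fun u _ => (Real.exp_pos _).le

lemma Φ_anti {s t : ℝ} (h : s ≤ t) : Φ t ≤ Φ s :=
  setIntegral_mono_set gauss_int.integrableOn
    (Eventually.of_forall fun u => (Real.exp_pos _).le)
    ((Ioi_subset_Ioi h).eventuallyLE)

lemma Φ_eq (t : ℝ) : Φ t = Φ 0 - ∫ u in (0:ℝ)..t, Real.exp (-u ^ 2 / 2) := by
  have h := intervalIntegral.integral_Iic_sub_Iic (μ := volume) (f := fun u : ℝ => Real.exp (-u ^ 2 / 2))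
    (a := 0) (b := t) gauss_int.integrableOn gauss_int.integrableOn
  have h0 := intervalIntegral.integral_Iic_add_Ioi (μ := volume) (f := fun u : ℝ => Real.exp (-u ^ 2 / 2))
    (b := (0:ℝ)) gauss_int.integrableOn gauss_int.integrableOn
  have ht := intervalIntegral.integral_Iic_add_Ioi (μ := volume) (f := fun u : ℝ => Real.exp (-u ^ 2 / 2))
    (b := t) gauss_int.integrableOn gauss_int.integrableOn
  have h' : (∫ x in Iic t, Real.exp (-x ^ 2 / 2)) - ∫ x in Iic (0:ℝ), Real.exp (-x ^ 2 / 2)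
      = ∫ x in (0:ℝ)..t, Real.exp (-x ^ 2 / 2) := h
  have h0' : (∫ x in Iic (0:ℝ), Real.exp (-x ^ 2 / 2)) + ∫ x in Ioi (0:ℝ), Real.exp (-x ^ 2 / 2)
      = ∫ x : ℝ, Real.exp (-x ^ 2 / 2) := h0
  have ht' : (∫ x in Iic t, Real.exp (-x ^ 2 / 2)) + ∫ x in Ioi t, Real.exp (-x ^ 2 / 2)
      = ∫ x : ℝ, Real.exp (-x ^ 2 / 2) := ht
  unfold Φ
  linarith

lemma Φ_deriv (t : ℝ) : HasDerivAt Φ (-Real.exp (-t ^ 2 / 2)) t := by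
  have h : HasDerivAt (fun s : ℝ => Φ 0 - ∫ u in (0:ℝ)..s, Real.exp (-u ^ 2 / 2))
      (-Real.exp (-t ^ 2 / 2)) t := by
    have h1 := intervalIntegral.integral_hasDerivAt_right
      (f := fun u : ℝ => Real.exp (-u ^ 2 / 2)) (a := 0) (b := t)
      (gauss_int.intervalIntegrable)
      (gauss_cont.stronglyMeasurable.stronglyMeasurableAtFilter)
      gauss_cont.continuousAt
    simpa using (h1.const_sub (Φ 0))
  rw [show Φ = fun s : ℝ => Φ 0 - ∫ u in (0:ℝ)..s, Real.exp (-u ^ 2 / 2) from funext Φ_eq]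
  exact h

lemma Φ_cont : Continuous Φ :=
  continuous_iff_continuousAt.2 fun t => (Φ_deriv t).continuousAt

lemma uexp_int : IntegrableOn (fun u : ℝ => u * Real.exp (-u ^ 2 / 2)) (Ioi 0) := by
  have h := integrableOn_rpow_mul_exp_neg_mul_sq (b := (1:ℝ)/2) (by norm_num) (s := 1)
    (by norm_num)
  refine IntegrableOn.congr_fun h ?_ measurableSet_Ioi
  intro u _
  show u ^ (1:ℝ) * Real.exp (-(1/2 : ℝ) * u ^ 2) = u * Real.exp (-u ^ 2 / 2)
  rw [Real.rpow_one, show -(1/2 : ℝ) * u ^ 2 = -u ^ 2 / 2 by ring]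

lemma uexp_deriv (u : ℝ) :
    HasDerivAt (fun v : ℝ => -Real.exp (-v ^ 2 / 2)) (u * Real.exp (-u ^ 2 / 2)) u := by
  have h1 : HasDerivAt (fun v : ℝ => -v ^ 2 / 2) (-u) u := by
    have h := ((hasDerivAt_pow 2 u).div_const 2).fun_neg
    have heq : (fun v : ℝ => -(v ^ 2 / 2)) = fun v : ℝ => -v ^ 2 / 2 := by
      funext v; ring
    rw [heq] at h
    refine h.congr_deriv ?_
    simp [pow_one]
  have h2 := (h1.exp).fun_neg
  refine h2.congr_deriv ?_
  ring

lemma Φ_le {t : ℝ} (ht : 1 ≤ t) : Φ t ≤ Real.exp (-t ^ 2 / 2) := by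
  have hsub : Ioi t ⊆ Ioi (0:ℝ) := Ioi_subset_Ioi (by linarith)
  have key : ∫ u in Ioi t, u * Real.exp (-u ^ 2 / 2) = Real.exp (-t ^ 2 / 2) := by
    have htend : Tendsto (fun v : ℝ => -Real.exp (-v ^ 2 / 2)) atTop (nhds 0) := by
      have hb : Tendsto (fun u : ℝ => -u ^ 2 / 2) atTop atBot := by
        have hp : Tendsto (fun u : ℝ => u ^ 2) atTop atTop := tendsto_pow_atTop two_ne_zero
        exact (tendsto_neg_atTop_atBot.comp hp).atBot_div_const (by norm_num)
      have := (Real.tendsto_exp_atBot.comp hb).neg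
      simpa using this
    have h := integral_Ioi_of_hasDerivAt_of_tendsto' (a := t)
      (f := fun v : ℝ => -Real.exp (-v ^ 2 / 2))
      (f' := fun u : ℝ => u * Real.exp (-u ^ 2 / 2))
      (fun x _ => uexp_deriv x) (uexp_int.mono_set hsub) htend
    simpa using h
  calc Φ t ≤ ∫ u in Ioi t, u * Real.exp (-u ^ 2 / 2) := by
        apply setIntegral_mono_on (gauss_int.integrableOn) (uexp_int.mono_set hsub)
          measurableSet_Ioi
        intro u hu
        have hu1 : (1:ℝ) ≤ u := le_trans ht (le_of_lt hu)
        nlinarith [Real.exp_pos (-u ^ 2 / 2)]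
    _ = Real.exp (-t ^ 2 / 2) := key

lemma Φ_bound (c : ℝ) :
    ∃ C : ℝ, 0 < C ∧ ∀ z, 0 ≤ z → Φ (c + z) ≤ C * Real.exp (-z ^ 2 / 4) := by
  set z₀ : ℝ := max (1 - c) 0 with hz₀def
  have hz₀ : 0 ≤ z₀ := le_max_right _ _
  have hz₀' : 1 - c ≤ z₀ := le_max_left _ _
  refine ⟨Φ c * Real.exp (z₀ ^ 2 / 4) + Real.exp (c ^ 2 / 2),
    add_pos_of_nonneg_of_pos (mul_nonneg (Φ_nonneg c) (Real.exp_pos _).le) (Real.exp_pos _),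
    fun z hz => ?_⟩
  by_cases hcase : z ≤ z₀
  · have h1 : Φ (c + z) ≤ Φ c := Φ_anti (by linarith)
    have h2 : Real.exp (-z₀ ^ 2 / 4) ≤ Real.exp (-z ^ 2 / 4) := by
      apply Real.exp_le_exp.2
      nlinarith
    calc Φ (c + z) ≤ Φ c := h1
      _ = (Φ c * Real.exp (z₀ ^ 2 / 4)) * Real.exp (-z₀ ^ 2 / 4) := by
          rw [mul_assoc, ← Real.exp_add, show z₀ ^ 2 / 4 + -z₀ ^ 2 / 4 = 0 by ring,
            Real.exp_zero, mul_one]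
      _ ≤ (Φ c * Real.exp (z₀ ^ 2 / 4)) * Real.exp (-z ^ 2 / 4) := by
          apply mul_le_mul_of_nonneg_left h2
          exact mul_nonneg (Φ_nonneg c) (Real.exp_pos _).le
      _ ≤ _ := by
          have := Real.exp_pos (-z ^ 2 / 4)
          have := Real.exp_pos (c ^ 2 / 2)
          nlinarith
  · push_neg at hcase
    have h1z : 1 ≤ c + z := by linarith
    have h1 := Φ_le h1z
    have h2 : Real.exp (-(c + z) ^ 2 / 2) ≤ Real.exp (c ^ 2 / 2) * Real.exp (-z ^ 2 / 4) := by
      rw [← Real.exp_add]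
      apply Real.exp_le_exp.2
      nlinarith [sq_nonneg (2 * c + z)]
    have hnn : 0 ≤ Φ c * Real.exp (z₀ ^ 2 / 4) :=
      mul_nonneg (Φ_nonneg c) (Real.exp_pos _).le
    calc Φ (c + z) ≤ Real.exp (-(c + z) ^ 2 / 2) := h1
      _ ≤ Real.exp (c ^ 2 / 2) * Real.exp (-z ^ 2 / 4) := h2
      _ ≤ _ := by nlinarith [Real.exp_pos (-z ^ 2 / 4)]

lemma integrableOn_K (p x : ℝ) (hp : 0 < p) :
    IntegrableOn (fun z : ℝ => Real.exp (-(x + z) ^ 2 / 2) * z ^ (p - 1)) (Set.Ioi 0) := by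
  have base : IntegrableOn (fun z : ℝ => z ^ (p - 1) * Real.exp (-(1/4 : ℝ) * z ^ 2))
      (Ioi 0) := integrableOn_rpow_mul_exp_neg_mul_sq (by norm_num) (by linarith)
  refine Integrable.mono' (base.const_mul (Real.exp (x ^ 2 / 2))) ?_ ?_
  · apply ContinuousOn.aestronglyMeasurable ?_ measurableSet_Ioi
    apply ContinuousOn.mul
    · exact Continuous.continuousOn (by continuity)
    · exact ContinuousOn.rpow_const continuousOn_id (fun z hz => Or.inl (ne_of_gt hz))
  · filter_upwards [ae_restrict_mem measurableSet_Ioi] with z hz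
    have hz0 : (0:ℝ) < z := hz
    rw [Real.norm_eq_abs,
      abs_of_nonneg (mul_nonneg (Real.exp_pos _).le (Real.rpow_nonneg hz0.le _))]
    have h1 : Real.exp (-(x + z) ^ 2 / 2)
        ≤ Real.exp (x ^ 2 / 2) * Real.exp (-(1/4 : ℝ) * z ^ 2) := by
      rw [← Real.exp_add]
      apply Real.exp_le_exp.2
      nlinarith [sq_nonneg (2 * x + z)]
    calc Real.exp (-(x + z) ^ 2 / 2) * z ^ (p - 1)
        ≤ (Real.exp (x ^ 2 / 2) * Real.exp (-(1/4 : ℝ) * z ^ 2)) * z ^ (p - 1) :=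
          mul_le_mul_of_nonneg_right h1 (Real.rpow_nonneg hz0.le _)
      _ = Real.exp (x ^ 2 / 2) * (z ^ (p - 1) * Real.exp (-(1/4 : ℝ) * z ^ 2)) := by ring

lemma integrableOn_Hint (p x : ℝ) (hp : 0 < p) :
    IntegrableOn (fun z : ℝ => Real.exp (-x * z - z ^ 2 / 2) * z ^ (p - 1)) (Set.Ioi 0) := by
  have h := (integrableOn_K p x hp).const_mul (Real.exp (x ^ 2 / 2))
  refine IntegrableOn.congr_fun h ?_ measurableSet_Ioi
  intro z _
  have harg : x ^ 2 / 2 + -(x + z) ^ 2 / 2 = -x * z - z ^ 2 / 2 := by ring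
  show Real.exp (x ^ 2 / 2) * (Real.exp (-(x + z) ^ 2 / 2) * z ^ (p - 1))
      = Real.exp (-x * z - z ^ 2 / 2) * z ^ (p - 1)
  rw [← mul_assoc, ← Real.exp_add, harg]

lemma exp_split (x z : ℝ) :
    Real.exp (-x ^ 2 / 2) * Real.exp (-x * z - z ^ 2 / 2) = Real.exp (-(x + z) ^ 2 / 2) := by
  rw [← Real.exp_add]
  congr 1
  ring

lemma H_nonneg (p x : ℝ) : 0 ≤ H p x :=
  setIntegral_nonneg measurableSet_Ioi fun z hz =>
    mul_nonneg (Real.exp_pos _).le (Real.rpow_nonneg (le_of_lt hz) _)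

lemma H_mono (p : ℝ) {x c : ℝ} (hp : 0 < p) (h : c ≤ x) : H p x ≤ H p c := by
  apply setIntegral_mono_on (integrableOn_Hint p x hp) (integrableOn_Hint p c hp)
    measurableSet_Ioi
  intro z hz
  have hz0 : (0:ℝ) < z := hz
  apply mul_le_mul_of_nonneg_right _ (Real.rpow_nonneg hz0.le _)
  apply Real.exp_le_exp.2
  nlinarith

end GaussianHAux

open GaussianHAux in
theorem integral_gaussian_H (q : ℝ) (hq : 0 < q) (c : ℝ) :
    ∫ x in Set.Ioi c, Real.exp (-x ^ 2 / 2) / Real.sqrt (2 * Real.pi) * H (2 * q) x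
      = Real.exp (-c ^ 2 / 2) / (Real.sqrt (2 * Real.pi) * (2 * q)) * H (2 * q + 1) c := by
  have h2q : (0:ℝ) < 2 * q := by linarith
  have h2q' : (2:ℝ) * q ≠ 0 := ne_of_gt h2q
  have sqrtpos : 0 < Real.sqrt (2 * Real.pi) := Real.sqrt_pos.2 (by positivity)
  set F : ℝ → ℝ → ℝ := fun x z => Real.exp (-(x + z) ^ 2 / 2) * z ^ (2 * q - 1) with hF
  -- pointwise: exp(-x²/2) * H (2q) x = ∫ F x z dz
  have hHx : ∀ x : ℝ, Real.exp (-x ^ 2 / 2) * H (2 * q) x = ∫ z in Ioi (0:ℝ), F x z := by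
    intro x
    rw [H, ← integral_const_mul]
    apply setIntegral_congr_fun measurableSet_Ioi
    intro z _
    show Real.exp (-x ^ 2 / 2) * (Real.exp (-x * z - z ^ 2 / 2) * z ^ (2 * q - 1)) = F x z
    simp only [hF]
    rw [← mul_assoc, exp_split]
  -- measurability of uncurried F
  have hFmeas : AEStronglyMeasurable (Function.uncurry F)
      ((volume.restrict (Ioi c)).prod (volume.restrict (Ioi (0:ℝ)))) := by
    rw [Measure.prod_restrict]
    apply ContinuousOn.aestronglyMeasurable ?_ (measurableSet_Ioi.prod measurableSet_Ioi)
    apply ContinuousOn.mul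
    · exact Continuous.continuousOn (by continuity)
    · exact ContinuousOn.rpow_const continuous_snd.continuousOn
        (fun p hp => Or.inl (ne_of_gt hp.2))
  -- integrability of uncurried F on the product
  have hFint : Integrable (Function.uncurry F)
      ((volume.restrict (Ioi c)).prod (volume.restrict (Ioi (0:ℝ)))) := by
    rw [integrable_prod_iff hFmeas]
    constructor
    · exact Eventually.of_forall fun x => integrableOn_K (2 * q) x h2q
    · apply Integrable.mono'
        (g := fun x : ℝ => H (2 * q) c * Real.exp (-x ^ 2 / 2))
        ((gauss_int.const_mul (H (2 * q) c)).integrableOn)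
        (hFmeas.norm.integral_prod_right')
      filter_upwards [ae_restrict_mem measurableSet_Ioi] with x hxc
      have h1 : (∫ z, ‖Function.uncurry F (x, z)‖ ∂(volume.restrict (Ioi (0:ℝ))))
          = Real.exp (-x ^ 2 / 2) * H (2 * q) x := by
        rw [hHx x]
        apply setIntegral_congr_fun measurableSet_Ioi
        intro z hz
        simp only [Function.uncurry, Real.norm_eq_abs]
        exact abs_of_nonneg (mul_nonneg (Real.exp_pos _).le (Real.rpow_nonneg hz.le _))
      rw [Real.norm_eq_abs, h1,
        abs_of_nonneg (mul_nonneg (Real.exp_pos _).le (H_nonneg _ _))]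
      calc Real.exp (-x ^ 2 / 2) * H (2 * q) x
          ≤ Real.exp (-x ^ 2 / 2) * H (2 * q) c :=
            mul_le_mul_of_nonneg_left (H_mono _ h2q (le_of_lt hxc)) (Real.exp_pos _).le
        _ = H (2 * q) c * Real.exp (-x ^ 2 / 2) := mul_comm _ _
  -- Fubini
  have hswap : (∫ x in Ioi c, ∫ z in Ioi (0:ℝ), F x z)
      = ∫ z in Ioi (0:ℝ), ∫ x in Ioi c, F x z := integral_integral_swap hFint
  -- inner integral via translation
  have htrans : ∀ z : ℝ, (∫ x in Ioi c, Real.exp (-(x + z) ^ 2 / 2)) = Φ (c + z) := by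
    intro z
    have h := (measurePreserving_add_right volume z).setIntegral_preimage_emb
      (measurableEmbedding_addRight z) (fun u => Real.exp (-u ^ 2 / 2)) (Ioi (c + z))
    have hpre : (fun x : ℝ => x + z) ⁻¹' (Ioi (c + z)) = Ioi c := by
      ext x
      simp [add_lt_add_iff_right]
    rw [hpre] at h
    exact h
  have hinner : ∀ z ∈ Ioi (0:ℝ), (∫ x in Ioi c, F x z) = z ^ (2 * q - 1) * Φ (c + z) := by
    intro z _
    rw [hF]
    simp only
    rw [integral_mul_const, htrans z, mul_comm]
  -- integration by parts on (0, ∞)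
  obtain ⟨C, hC, hCb⟩ := Φ_bound c
  have t1 : IntegrableOn (fun z : ℝ => z ^ (2 * q - 1) * Φ (c + z)) (Ioi 0) := by
    have base : IntegrableOn (fun z : ℝ => z ^ (2 * q - 1) * Real.exp (-(1/4 : ℝ) * z ^ 2))
        (Ioi 0) := integrableOn_rpow_mul_exp_neg_mul_sq (by norm_num) (by linarith)
    refine Integrable.mono' (base.const_mul C) ?_ ?_
    · apply ContinuousOn.aestronglyMeasurable ?_ measurableSet_Ioi
      apply ContinuousOn.mul
      · exact ContinuousOn.rpow_const continuousOn_id (fun z hz => Or.inl (ne_of_gt hz))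
      · exact (Φ_cont.comp (continuous_const.add continuous_id)).continuousOn
    · filter_upwards [ae_restrict_mem measurableSet_Ioi] with z hz
      have hz0 : (0:ℝ) < z := hz
      rw [Real.norm_eq_abs,
        abs_of_nonneg (mul_nonneg (Real.rpow_nonneg hz0.le _) (Φ_nonneg _))]
      have hb := hCb z hz0.le
      calc z ^ (2 * q - 1) * Φ (c + z)
          ≤ z ^ (2 * q - 1) * (C * Real.exp (-z ^ 2 / 4)) :=
            mul_le_mul_of_nonneg_left hb (Real.rpow_nonneg hz0.le _)
        _ = C * (z ^ (2 * q - 1) * Real.exp (-(1/4 : ℝ) * z ^ 2)) := by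
            rw [show -(1/4 : ℝ) * z ^ 2 = -z ^ 2 / 4 by ring]
            ring
  have t2 : IntegrableOn
      (fun z : ℝ => z ^ (2 * q) / (2 * q) * Real.exp (-(c + z) ^ 2 / 2)) (Ioi 0) := by
    have h := (integrableOn_K (2 * q + 1) c (by linarith)).const_mul (1 / (2 * q))
    refine IntegrableOn.congr_fun h ?_ measurableSet_Ioi
    intro z _
    show 1 / (2 * q) * (Real.exp (-(c + z) ^ 2 / 2) * z ^ (2 * q + 1 - 1))
      = z ^ (2 * q) / (2 * q) * Real.exp (-(c + z) ^ 2 / 2)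
    rw [show (2 * q + 1 - 1 : ℝ) = 2 * q by ring]
    ring
  have hderiv : ∀ z ∈ Ioi (0:ℝ),
      HasDerivAt (fun z : ℝ => z ^ (2 * q) / (2 * q) * Φ (c + z))
        (z ^ (2 * q - 1) * Φ (c + z)
          - z ^ (2 * q) / (2 * q) * Real.exp (-(c + z) ^ 2 / 2)) z := by
    intro z hz
    have hrpow : HasDerivAt (fun z : ℝ => z ^ (2 * q) / (2 * q)) (z ^ (2 * q - 1)) z := by
      have h := (Real.hasDerivAt_rpow_const (x := z) (p := 2 * q)
        (Or.inl (ne_of_gt hz))).div_const (2 * q)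
      refine h.congr_deriv ?_
      field_simp
    have hΦc : HasDerivAt (fun z : ℝ => Φ (c + z)) (-Real.exp (-(c + z) ^ 2 / 2)) z := by
      have h2 : HasDerivAt (fun z : ℝ => c + z) 1 z := by
        simpa using (hasDerivAt_id z).const_add c
      have := (Φ_deriv (c + z)).comp z h2
      simpa [Function.comp_def] using this
    have := hrpow.fun_mul hΦc
    refine this.congr_deriv ?_
    ring
  have hcont0 : ContinuousWithinAt (fun z : ℝ => z ^ (2 * q) / (2 * q) * Φ (c + z))
      (Ici 0) 0 := by
    apply ContinuousAt.continuousWithinAt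
    apply ContinuousAt.mul
    · exact (Real.continuousAt_rpow_const 0 (2 * q) (Or.inr h2q.le)).div_const _
    · exact (Φ_cont.comp (continuous_const.add continuous_id)).continuousAt
  have htend : Tendsto (fun z : ℝ => z ^ (2 * q) / (2 * q) * Φ (c + z)) atTop (nhds 0) := by
    have hbig : Tendsto (fun z : ℝ => (C / (2 * q)) * (z ^ (2 * q) * Real.exp (-(1/4 : ℝ) * z ^ 2)))
        atTop (nhds 0) := by
      have ho := rpow_mul_exp_neg_mul_sq_isLittleO_exp_neg (b := (1/4 : ℝ)) (by norm_num) (2 * q)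
      have hexp : Tendsto (fun x : ℝ => Real.exp (-(1/2 : ℝ) * x)) atTop (nhds 0) := by
        have hlin : Tendsto (fun x : ℝ => -(1/2 : ℝ) * x) atTop atBot :=
          (tendsto_const_mul_atBot_of_neg (by norm_num)).mpr tendsto_id
        exact Real.tendsto_exp_atBot.comp hlin
      have h0 := ho.isBigO.trans_tendsto hexp
      have := h0.const_mul (C / (2 * q))
      simpa using this
    apply squeeze_zero' ?_ ?_ hbig
    · filter_upwards [eventually_ge_atTop (0:ℝ)] with z hz
      exact mul_nonneg (div_nonneg (Real.rpow_nonneg hz _) h2q.le) (Φ_nonneg _)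
    · filter_upwards [eventually_ge_atTop (0:ℝ)] with z hz
      calc z ^ (2 * q) / (2 * q) * Φ (c + z)
          ≤ z ^ (2 * q) / (2 * q) * (C * Real.exp (-z ^ 2 / 4)) := by
            apply mul_le_mul_of_nonneg_left (hCb z hz)
            exact div_nonneg (Real.rpow_nonneg hz _) h2q.le
        _ = (C / (2 * q)) * (z ^ (2 * q) * Real.exp (-(1/4 : ℝ) * z ^ 2)) := by
            rw [show -(1/4 : ℝ) * z ^ 2 = -z ^ 2 / 4 by ring]
            ring
  have hIBP := integral_Ioi_of_hasDerivAt_of_tendsto hcont0 hderiv (t1.sub t2) htend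
  have hg0 : (0:ℝ) ^ (2 * q) / (2 * q) * Φ (c + 0) = 0 := by
    rw [Real.zero_rpow (ne_of_gt h2q)]
    ring
  rw [integral_sub t1 t2, hg0, sub_zero] at hIBP
  have hkey : (∫ z in Ioi (0:ℝ), z ^ (2 * q - 1) * Φ (c + z))
      = ∫ z in Ioi (0:ℝ), z ^ (2 * q) / (2 * q) * Real.exp (-(c + z) ^ 2 / 2) := by
    linarith [hIBP]
  -- final assembly
  calc (∫ x in Ioi c, Real.exp (-x ^ 2 / 2) / Real.sqrt (2 * Real.pi) * H (2 * q) x)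
      = ∫ x in Ioi c, (Real.sqrt (2 * Real.pi))⁻¹ * ∫ z in Ioi (0:ℝ), F x z := by
        apply setIntegral_congr_fun measurableSet_Ioi
        intro x _
        show Real.exp (-x ^ 2 / 2) / Real.sqrt (2 * Real.pi) * H (2 * q) x
            = (Real.sqrt (2 * Real.pi))⁻¹ * ∫ z in Ioi (0:ℝ), F x z
        rw [← hHx x]
        ring
    _ = (Real.sqrt (2 * Real.pi))⁻¹ * ∫ x in Ioi c, ∫ z in Ioi (0:ℝ), F x z := by
        rw [integral_const_mul]
    _ = (Real.sqrt (2 * Real.pi))⁻¹ * ∫ z in Ioi (0:ℝ), ∫ x in Ioi c, F x z := by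
        rw [hswap]
    _ = (Real.sqrt (2 * Real.pi))⁻¹ * ∫ z in Ioi (0:ℝ), z ^ (2 * q - 1) * Φ (c + z) := by
        congr 1
        exact setIntegral_congr_fun measurableSet_Ioi hinner
    _ = (Real.sqrt (2 * Real.pi))⁻¹
        * ∫ z in Ioi (0:ℝ), z ^ (2 * q) / (2 * q) * Real.exp (-(c + z) ^ 2 / 2) := by
        rw [hkey]
    _ = (Real.sqrt (2 * Real.pi))⁻¹ * ((Real.exp (-c ^ 2 / 2) / (2 * q))
        * ∫ z in Ioi (0:ℝ), Real.exp (-c * z - z ^ 2 / 2) * z ^ (2 * q)) := by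
        congr 1
        rw [← integral_const_mul]
        apply setIntegral_congr_fun measurableSet_Ioi
        intro z _
        show z ^ (2 * q) / (2 * q) * Real.exp (-(c + z) ^ 2 / 2)
            = Real.exp (-c ^ 2 / 2) / (2 * q) * (Real.exp (-c * z - z ^ 2 / 2) * z ^ (2 * q))
        rw [← exp_split c z]
        ring
    _ = Real.exp (-c ^ 2 / 2) / (Real.sqrt (2 * Real.pi) * (2 * q)) * H (2 * q + 1) c := by
        rw [H, show (2 * q + 1 - 1 : ℝ) = 2 * q by ring]
        field_simp
end

section
/- If σ-fields G₁ and G₂ are conditionally independent given H on a probability space, and G₁' ⊆ G₁ is a sub-σ-field, then G₁ and G₂ are conditionally independent given σ(H, G₁'). -/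
open MeasureTheory ProbabilityTheory

/-- Partial upwards monotonicity of conditional independence in the conditioning σ-field. -/
theorem condIndep_sup_of_le {Ω : Type*} {mΩ : MeasurableSpace Ω} [StandardBorelSpace Ω]
    (μ : Measure Ω) [IsProbabilityMeasure μ]
    (G₁ G₂ G₁' H : MeasurableSpace Ω) (hG₁ : G₁ ≤ mΩ) (hG₂ : G₂ ≤ mΩ) (hH : H ≤ mΩ)
    (hsub : G₁' ≤ G₁)
    (h : CondIndep H G₁ G₂ hH μ) :
    CondIndep (H ⊔ G₁') G₁ G₂ (sup_le hH (hsub.trans hG₁)) μ := by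
  letI : MeasurableSpace Ω := mΩ
  have hm : H ⊔ G₁' ≤ mΩ := sup_le hH (hsub.trans hG₁)
  have hHm : H ≤ (H ⊔ G₁') := le_sup_left
  have hG₁'m : G₁' ≤ (H ⊔ G₁') := le_sup_right
  -- integrability and boundedness of indicators
  have intInd : ∀ s : Set Ω, MeasurableSet[mΩ] s →
      Integrable (Set.indicator s fun _ => (1 : ℝ)) μ := fun s hs =>
    Integrable.indicator (μ := μ) (integrable_const (1 : ℝ)) hs
  have bddInd : ∀ (s : Set Ω) (x : Ω), |Set.indicator s (fun _ => (1 : ℝ)) x| ≤ 1 := by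
    intro s x
    by_cases hx : x ∈ s <;> simp [Set.indicator_apply, hx]
  -- ae bound on conditional expectations of indicators
  have bddCond : ∀ (m' : MeasurableSpace Ω) (s : Set Ω),
      ∀ᵐ x ∂μ, ‖(μ[Set.indicator s fun _ => (1 : ℝ)|m']) x‖ ≤ 1 := by
    intro m' s
    have : ∀ᵐ x ∂μ, |Set.indicator s (fun _ => (1 : ℝ)) x| ≤ ((1 : NNReal) : ℝ) :=
      Filter.Eventually.of_forall fun x => by simpa using bddInd s x
    filter_upwards [ae_bdd_condExp_of_ae_bdd this] with x hx
    simpa using hx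
  -- conditional independence in condexp form
  have hci := (condIndep_iff H G₁ G₂ hH hG₁ hG₂ μ).mp h
  -- the π-system generating (H ⊔ G₁')
  set π : Set (Set Ω) :=
    {s | ∃ t g, MeasurableSet[H] t ∧ MeasurableSet[G₁'] g ∧ s = t ∩ g} with hπ_def
  have hpi : IsPiSystem π := by
    rintro s₁ ⟨t₁, g₁, ht₁, hg₁, rfl⟩ s₂ ⟨t₂, g₂, ht₂, hg₂, rfl⟩ -
    exact ⟨t₁ ∩ t₂, g₁ ∩ g₂, ht₁.inter ht₂, hg₁.inter hg₂, by
      ext x; simp only [Set.mem_inter_iff]; tauto⟩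
  have hgen : (H ⊔ G₁') = MeasurableSpace.generateFrom π := by
    refine le_antisymm (sup_le ?_ ?_) (MeasurableSpace.generateFrom_le ?_)
    · intro t ht
      exact MeasurableSpace.measurableSet_generateFrom
        ⟨t, Set.univ, ht, MeasurableSet.univ, (Set.inter_univ t).symm⟩
    · intro g hg
      exact MeasurableSpace.measurableSet_generateFrom
        ⟨Set.univ, g, MeasurableSet.univ, hg, (Set.univ_inter g).symm⟩
    · rintro s ⟨t, g, ht, hg, rfl⟩
      exact (hHm t ht).inter (hG₁'m g hg)
  -- core computation: integrating over an H-measurable set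
  have core : ∀ B, MeasurableSet[G₂] B → ∀ A', MeasurableSet[G₁] A' →
      ∀ t, MeasurableSet[H] t →
      ∫ x in t, Set.indicator (A' ∩ B) (fun _ => (1 : ℝ)) x ∂μ
        = ∫ x in t, Set.indicator A' (fun _ => (1 : ℝ)) x
            * (μ[Set.indicator B fun _ => (1 : ℝ)|H]) x ∂μ := by
    intro B hB A' hA' t ht
    have hA'0 : MeasurableSet[mΩ] A' := hG₁ A' hA'
    have hB0 : MeasurableSet[mΩ] B := hG₂ B hB
    have ht0 : MeasurableSet[mΩ] t := hH t ht
    have hF_sm : StronglyMeasurable[H] (μ[Set.indicator B fun _ => (1 : ℝ)|H]) :=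
      stronglyMeasurable_condExp
    have hFA : Integrable (fun x => (μ[Set.indicator B fun _ => (1 : ℝ)|H]) x
        * Set.indicator A' (fun _ => (1 : ℝ)) x) μ :=
      Integrable.bdd_mul (intInd A' hA'0) ((hF_sm.mono hH).aestronglyMeasurable) (bddCond H B)
    have hpull : μ[(fun x => (μ[Set.indicator B fun _ => (1 : ℝ)|H]) x
        * Set.indicator A' (fun _ => (1 : ℝ)) x)|H]
        =ᵐ[μ] fun x => (μ[Set.indicator B fun _ => (1 : ℝ)|H]) x
          * (μ[Set.indicator A' fun _ => (1 : ℝ)|H]) x :=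
      condExp_mul_of_stronglyMeasurable_left hF_sm hFA (intInd A' hA'0)
    calc ∫ x in t, Set.indicator (A' ∩ B) (fun _ => (1 : ℝ)) x ∂μ
        = ∫ x in t, (μ[Set.indicator (A' ∩ B) fun _ => (1 : ℝ)|H]) x ∂μ :=
          (setIntegral_condExp hH (intInd _ (hA'0.inter hB0)) ht).symm
      _ = ∫ x in t, (μ[Set.indicator A' fun _ => (1 : ℝ)|H]) x
            * (μ[Set.indicator B fun _ => (1 : ℝ)|H]) x ∂μ :=
          setIntegral_congr_ae (μ := μ) ht0 ((hci A' B hA' hB).mono fun x hx _ => hx)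
      _ = ∫ x in t, (μ[Set.indicator B fun _ => (1 : ℝ)|H]) x
            * (μ[Set.indicator A' fun _ => (1 : ℝ)|H]) x ∂μ := by
          simp_rw [mul_comm]
      _ = ∫ x in t, (μ[(fun x => (μ[Set.indicator B fun _ => (1 : ℝ)|H]) x
            * Set.indicator A' (fun _ => (1 : ℝ)) x)|H]) x ∂μ :=
          (setIntegral_congr_ae (μ := μ) ht0 (hpull.mono fun x hx _ => hx)).symm
      _ = ∫ x in t, (μ[Set.indicator B fun _ => (1 : ℝ)|H]) x
            * Set.indicator A' (fun _ => (1 : ℝ)) x ∂μ :=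
          setIntegral_condExp hH hFA ht
      _ = ∫ x in t, Set.indicator A' (fun _ => (1 : ℝ)) x
            * (μ[Set.indicator B fun _ => (1 : ℝ)|H]) x ∂μ := by
          simp_rw [mul_comm]
  -- the basic case of the π-system induction
  have hbasic : ∀ B, MeasurableSet[G₂] B → ∀ A, MeasurableSet[G₁] A →
      ∀ t g, MeasurableSet[H] t → MeasurableSet[G₁'] g →
      ∫ x in t ∩ g, Set.indicator (A ∩ B) (fun _ => (1 : ℝ)) x ∂μ
        = ∫ x in t ∩ g, (μ[Set.indicator A fun _ => (1 : ℝ)|(H ⊔ G₁')]) x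
            * (μ[Set.indicator B fun _ => (1 : ℝ)|H]) x ∂μ := by
    intro B hB A hA t g ht hg
    have hA0 : MeasurableSet[mΩ] A := hG₁ A hA
    have hB0 : MeasurableSet[mΩ] B := hG₂ B hB
    have hg0 : MeasurableSet[mΩ] g := hG₁ g (hsub g hg)
    have ht0 : MeasurableSet[mΩ] t := hH t ht
    have htg_m : MeasurableSet[(H ⊔ G₁')] (t ∩ g) := (hHm t ht).inter (hG₁'m g hg)
    have htg0 : MeasurableSet[mΩ] (t ∩ g) := hm _ htg_m
    have hF_sm : StronglyMeasurable[(H ⊔ G₁')] (μ[Set.indicator B fun _ => (1 : ℝ)|H]) :=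
      stronglyMeasurable_condExp.mono hHm
    have hFA : Integrable (fun x => (μ[Set.indicator B fun _ => (1 : ℝ)|H]) x
        * Set.indicator A (fun _ => (1 : ℝ)) x) μ :=
      Integrable.bdd_mul (intInd A hA0)
        ((stronglyMeasurable_condExp.mono hH).aestronglyMeasurable) (bddCond H B)
    have hpull : μ[(fun x => (μ[Set.indicator B fun _ => (1 : ℝ)|H]) x
        * Set.indicator A (fun _ => (1 : ℝ)) x)|(H ⊔ G₁')]
        =ᵐ[μ] fun x => (μ[Set.indicator B fun _ => (1 : ℝ)|H]) x
          * (μ[Set.indicator A fun _ => (1 : ℝ)|(H ⊔ G₁')]) x :=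
      condExp_mul_of_stronglyMeasurable_left hF_sm hFA (intInd A hA0)
    calc ∫ x in t ∩ g, Set.indicator (A ∩ B) (fun _ => (1 : ℝ)) x ∂μ
        = ∫ x in t, Set.indicator g (Set.indicator (A ∩ B) fun _ => (1 : ℝ)) x ∂μ := by
          rw [setIntegral_indicator (μ := μ) hg0]
      _ = ∫ x in t, Set.indicator ((g ∩ A) ∩ B) (fun _ => (1 : ℝ)) x ∂μ := by
          rw [Set.indicator_indicator, ← Set.inter_assoc]
      _ = ∫ x in t, Set.indicator (g ∩ A) (fun _ => (1 : ℝ)) x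
            * (μ[Set.indicator B fun _ => (1 : ℝ)|H]) x ∂μ :=
          core B hB (g ∩ A) ((hsub g hg).inter hA) t ht
      _ = ∫ x in t, Set.indicator g (fun y => Set.indicator A (fun _ => (1 : ℝ)) y
            * (μ[Set.indicator B fun _ => (1 : ℝ)|H]) y) x ∂μ := by
          refine setIntegral_congr_ae (μ := μ) ht0 (Filter.Eventually.of_forall fun x _ => ?_)
          by_cases hxg : x ∈ g <;> by_cases hxA : x ∈ A <;>
            simp [Set.indicator_apply, hxg, hxA, Set.mem_inter_iff]
      _ = ∫ x in t ∩ g, Set.indicator A (fun _ => (1 : ℝ)) x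
            * (μ[Set.indicator B fun _ => (1 : ℝ)|H]) x ∂μ := by
          rw [setIntegral_indicator (μ := μ) hg0]
      _ = ∫ x in t ∩ g, (μ[Set.indicator B fun _ => (1 : ℝ)|H]) x
            * Set.indicator A (fun _ => (1 : ℝ)) x ∂μ := by
          simp_rw [mul_comm]
      _ = ∫ x in t ∩ g, (μ[(fun x => (μ[Set.indicator B fun _ => (1 : ℝ)|H]) x
            * Set.indicator A (fun _ => (1 : ℝ)) x)|(H ⊔ G₁')]) x ∂μ :=
          (setIntegral_condExp hm hFA htg_m).symm
      _ = ∫ x in t ∩ g, (μ[Set.indicator B fun _ => (1 : ℝ)|H]) x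
            * (μ[Set.indicator A fun _ => (1 : ℝ)|(H ⊔ G₁')]) x ∂μ :=
          setIntegral_congr_ae (μ := μ) htg0 (hpull.mono fun x hx _ => hx)
      _ = ∫ x in t ∩ g, (μ[Set.indicator A fun _ => (1 : ℝ)|(H ⊔ G₁')]) x
            * (μ[Set.indicator B fun _ => (1 : ℝ)|H]) x ∂μ := by
          simp_rw [mul_comm]
  -- the main step
  have step : ∀ B, MeasurableSet[G₂] B → ∀ A, MeasurableSet[G₁] A →
      (fun x => (μ[Set.indicator A fun _ => (1 : ℝ)|(H ⊔ G₁')]) x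
        * (μ[Set.indicator B fun _ => (1 : ℝ)|H]) x)
        =ᵐ[μ] μ[Set.indicator (A ∩ B) fun _ => (1 : ℝ)|(H ⊔ G₁')] := by
    intro B hB A hA
    have hA0 : MeasurableSet[mΩ] A := hG₁ A hA
    have hB0 : MeasurableSet[mΩ] B := hG₂ B hB
    have hg_int : Integrable (fun x => (μ[Set.indicator A fun _ => (1 : ℝ)|(H ⊔ G₁')]) x
        * (μ[Set.indicator B fun _ => (1 : ℝ)|H]) x) μ :=
      Integrable.bdd_mul integrable_condExp
        ((stronglyMeasurable_condExp.mono hm).aestronglyMeasurable) (bddCond (H ⊔ G₁') A)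
    have key : ∀ s, MeasurableSet[(H ⊔ G₁')] s →
        ∫ x in s, Set.indicator (A ∩ B) (fun _ => (1 : ℝ)) x ∂μ
          = ∫ x in s, (μ[Set.indicator A fun _ => (1 : ℝ)|(H ⊔ G₁')]) x
              * (μ[Set.indicator B fun _ => (1 : ℝ)|H]) x ∂μ := by
      have htot : ∫ x, Set.indicator (A ∩ B) (fun _ => (1 : ℝ)) x ∂μ
          = ∫ x, (μ[Set.indicator A fun _ => (1 : ℝ)|(H ⊔ G₁')]) x
              * (μ[Set.indicator B fun _ => (1 : ℝ)|H]) x ∂μ := by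
        have := hbasic B hB A hA Set.univ Set.univ MeasurableSet.univ MeasurableSet.univ
        simpa [Measure.restrict_univ] using this
      refine MeasurableSpace.induction_on_inter (m := H ⊔ G₁') (s := π)
        (C := fun s _ => ∫ x in s, Set.indicator (A ∩ B) (fun _ => (1 : ℝ)) x ∂μ
          = ∫ x in s, (μ[Set.indicator A fun _ => (1 : ℝ)|(H ⊔ G₁')]) x
              * (μ[Set.indicator B fun _ => (1 : ℝ)|H]) x ∂μ) hgen hpi (by simp) ?_ ?_ ?_
      · rintro s ⟨t, g, ht, hg, rfl⟩
        exact hbasic B hB A hA t g ht hg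
      · intro s hs_m hs_eq
        have hs0 : MeasurableSet[mΩ] s := hm s hs_m
        have h1 := integral_add_compl (μ := μ) hs0 (intInd _ (hA0.inter hB0))
        have h2 := integral_add_compl (μ := μ) hs0 hg_int
        rw [← htot] at h2
        linarith
      · intro f hdisj hmeas hind
        have hmeas0 : ∀ i, MeasurableSet[mΩ] (f i) := fun i => hm _ (hmeas i)
        rw [integral_iUnion (μ := μ) hmeas0 hdisj (intInd _ (hA0.inter hB0)).integrableOn,
          integral_iUnion (μ := μ) hmeas0 hdisj hg_int.integrableOn]
        exact tsum_congr hind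
    refine ae_eq_condExp_of_forall_setIntegral_eq hm (intInd _ (hA0.inter hB0))
      (fun s _ _ => hg_int.integrableOn) (fun s hs _ => (key s hs).symm) ?_
    exact (stronglyMeasurable_condExp.mul
      (stronglyMeasurable_condExp.mono hHm)).aestronglyMeasurable
  -- special case A = univ : the H-condexp equals the (H ⊔ G₁')-condexp for G₂-sets
  have step2 : ∀ B, MeasurableSet[G₂] B →
      (μ[Set.indicator B fun _ => (1 : ℝ)|H])
        =ᵐ[μ] μ[Set.indicator B fun _ => (1 : ℝ)|(H ⊔ G₁')] := by
    intro B hB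
    have := step B hB Set.univ MeasurableSet.univ
    simp only [Set.indicator_univ, Set.univ_inter] at this
    have hone : (μ[(fun _ => (1 : ℝ))|(H ⊔ G₁')]) = fun _ => (1 : ℝ) := condExp_const hm 1
    refine (Filter.EventuallyEq.symm ?_).trans this
    filter_upwards with x
    rw [hone]
    simp
  -- conclude
  rw [condIndep_iff (H ⊔ G₁') G₁ G₂ hm hG₁ hG₂ μ]
  intro A B hA hB
  have h1 := (step B hB A hA).symm
  have h2 := step2 B hB
  filter_upwards [h1, h2] with x hx1 hx2
  rw [hx1, Pi.mul_apply, hx2]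
end

section
/- Let α ∈ (0,1) and let f₁ : ℝ → (0, ∞) be a bounded continuous probability density with f₁(x)·|x|^{1+α} → c_± > 0 as x → ±∞, and set f_t(x) = f₁(x t^{-1/α}) t^{-1/α}. Define q_t(x, y) = f_{e^t - 1}(y e^{t/α} - x) e^{t/α} for t > 0. Then for every x ≠ 0 and λ > 0, the integral v_λ(x,x) = ∫₀^∞ q_t(x,x) e^{-λ t} dt is finite, while v_λ(0,0) = ∞. -/
open MeasureTheory Filter Set Real

private lemma exp_sub_one_le_mul' {t : ℝ} (h0 : 0 ≤ t) (h1 : t ≤ 1) :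
    Real.exp t - 1 ≤ Real.exp 1 * t := by
  have h2 : (1 - t) * Real.exp t ≤ 1 := by
    have h3 := Real.add_one_le_exp (-t)
    have h4 : Real.exp (-t) * Real.exp t = 1 := by rw [← Real.exp_add]; simp
    nlinarith [Real.exp_pos t]
  have h5 : Real.exp t ≤ Real.exp 1 := Real.exp_le_exp.2 h1
  nlinarith [Real.exp_pos t]

private lemma one_lt_exp_of_pos' {t : ℝ} (h : 0 < t) : 1 < Real.exp t := by
  calc (1:ℝ) = Real.exp 0 := Real.exp_zero.symm
  _ < Real.exp t := Real.exp_lt_exp.2 h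

private lemma rpow_lintegral_top' {p : ℝ} (hp : p ≤ -1) :
    ∫⁻ t in Set.Ioc (0:ℝ) 1, ENNReal.ofReal (t ^ p) = ⊤ := by
  by_contra hfin
  have hint : Integrable (fun t : ℝ => t ^ p) (volume.restrict (Set.Ioc (0:ℝ) 1)) := by
    rw [← lintegral_ofReal_ne_top_iff_integrable]
    · exact hfin
    · exact (measurable_id.pow_const p).aestronglyMeasurable
    · filter_upwards [ae_restrict_mem measurableSet_Ioc] with t ht
      exact Real.rpow_nonneg ht.1.le _
  have h2 : IntegrableOn (fun t : ℝ => t ^ p) (Set.Ioo (0:ℝ) 1) :=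
    MeasureTheory.IntegrableOn.mono_set hint Set.Ioo_subset_Ioc_self
  rw [intervalIntegral.integrableOn_Ioo_rpow_iff zero_lt_one] at h2
  linarith

set_option maxHeartbeats 1000000 in
/-- Resolvent density of the stable Ornstein–Uhlenbeck process: finite off `0`, infinite at `0`,
for `α ∈ (0,1)` and a stable density `f₁` with jumps of both signs (heavy tails on both sides). -/
theorem stable_OU_resolvent_density (α : ℝ) (hα : α ∈ Set.Ioo (0:ℝ) 1)
    (f₁ : ℝ → ℝ) (hcont : Continuous f₁) (hpos : ∀ x, 0 < f₁ x)
    (hbdd : ∃ M, ∀ x, f₁ x ≤ M)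
    (cplus cminus : ℝ) (hcp : 0 < cplus) (hcm : 0 < cminus)
    (htail_plus : Filter.Tendsto (fun x => f₁ x * |x| ^ (1 + α)) Filter.atTop (nhds cplus))
    (htail_minus : Filter.Tendsto (fun x => f₁ x * |x| ^ (1 + α)) Filter.atBot (nhds cminus))
    (lam : ℝ) (hlam : 0 < lam) :
    (∀ x : ℝ, x ≠ 0 →
      (∫⁻ t in Set.Ioi (0:ℝ),
        ENNReal.ofReal ((f₁ ((x * Real.exp (t / α) - x) * (Real.exp t - 1) ^ (-(1:ℝ) / α))
            * (Real.exp t - 1) ^ (-(1:ℝ) / α) * Real.exp (t / α)) * Real.exp (-lam * t)))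
        ≠ ⊤) ∧
    (∫⁻ t in Set.Ioi (0:ℝ),
        ENNReal.ofReal ((f₁ 0 * (Real.exp t - 1) ^ (-(1:ℝ) / α) * Real.exp (t / α))
          * Real.exp (-lam * t)))
      = ⊤ := by
  obtain ⟨hα0, hα1⟩ := hα
  set p : ℝ := -(1:ℝ)/α with hp
  have hinv : 1 < 1/α := one_lt_one_div hα0 hα1
  have hp_le : p < -1 := by rw [hp, neg_div]; linarith
  have hp_neg : p < 0 := by linarith
  constructor
  · -- finite part
    intro x hx
    obtain ⟨M, hM⟩ := hbdd
    have hM0 : 0 < M := (hpos 0).trans_le (hM 0)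
    have h1p : 1 + p < 0 := by linarith
    have hq : (0:ℝ) < 1 + α := by linarith
    -- tail bound
    obtain ⟨A, hA⟩ := Filter.eventually_atTop.1
      (htail_plus.eventually_le_const (lt_add_one cplus))
    obtain ⟨B, hB⟩ := Filter.eventually_atBot.1
      (htail_minus.eventually_le_const (lt_add_one cminus))
    set C : ℝ := max (cplus + 1) (cminus + 1) with hCdef
    have hC : 0 < C := lt_of_lt_of_le (by linarith) (le_max_left _ _)
    set R : ℝ := max 1 (max A (-B)) with hRdef
    have hR1 : (1:ℝ) ≤ R := le_max_left _ _
    have hR0 : (0:ℝ) < R := lt_of_lt_of_le one_pos hR1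
    have htail : ∀ y : ℝ, R ≤ |y| → f₁ y * |y| ^ (1 + α) ≤ C := by
      intro y hy
      rcases le_abs.1 hy with h | h
      · refine le_trans (hA y ?_) (le_max_left _ _)
        exact le_trans (le_trans (le_max_left A (-B)) (le_max_right _ _)) h
      · have hyB : y ≤ B := by
          have : -B ≤ R := le_trans (le_max_right A (-B)) (le_max_right _ _)
          linarith
        exact le_trans (hB y hyB) (le_max_right _ _)
    have htail' : ∀ y : ℝ, R ≤ |y| → f₁ y ≤ C / |y| ^ (1 + α) := by
      intro y hy
      have hy0 : 0 < |y| := lt_of_lt_of_le hR0 hy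
      rw [le_div_iff₀ (Real.rpow_pos_of_pos hy0 _)]
      exact htail y hy
    -- choice of s₀
    have hxa : 0 < |x| := abs_pos.2 hx
    set c₂ : ℝ := Real.exp p / α with hc₂
    have hc₂0 : 0 < c₂ := by positivity
    set E : ℝ := max (R / (|x| * c₂)) 1 with hEdef
    have hE1 : (1:ℝ) ≤ E := le_max_right _ _
    have hE0 : (0:ℝ) < E := lt_of_lt_of_le one_pos hE1
    set s₀ : ℝ := E ^ ((1:ℝ)/(1+p)) with hs₀def
    have hs₀0 : 0 < s₀ := Real.rpow_pos_of_pos hE0 _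
    have hs₀1 : s₀ ≤ 1 :=
      Real.rpow_le_one_of_one_le_of_nonpos hE1 (le_of_lt (div_neg_of_pos_of_neg one_pos h1p))
    have hs₀pow : s₀ ^ (1+p) = E := by
      rw [hs₀def, ← Real.rpow_mul hE0.le, one_div_mul_cancel (ne_of_lt h1p), Real.rpow_one]
    set K₁ : ℝ := C * Real.exp (1/α) / (|x| * c₂) ^ (1 + α) with hK₁
    -- pointwise bound near 0
    have hbound1 : ∀ t ∈ Set.Ioc (0:ℝ) s₀,
        (f₁ ((x * Real.exp (t / α) - x) * (Real.exp t - 1) ^ p)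
          * (Real.exp t - 1) ^ p * Real.exp (t / α)) * Real.exp (-lam * t)
        ≤ K₁ * t ^ (-α) := by
      intro t ht
      obtain ⟨ht0, hts⟩ := ht
      have ht1 : t ≤ 1 := hts.trans hs₀1
      have het : 0 < Real.exp t - 1 := sub_pos.2 (one_lt_exp_of_pos' ht0)
      have hetp : 0 < (Real.exp t - 1) ^ p := Real.rpow_pos_of_pos het p
      set u : ℝ := (x * Real.exp (t / α) - x) * (Real.exp t - 1) ^ p with hu
      have hea : 0 < Real.exp (t/α) - 1 := sub_pos.2 (one_lt_exp_of_pos' (by positivity))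
      have habs : |u| = |x| * ((Real.exp (t/α) - 1) * (Real.exp t - 1) ^ p) := by
        rw [hu, show x * Real.exp (t / α) - x = x * (Real.exp (t/α) - 1) by ring, mul_assoc,
          abs_mul, abs_of_pos (mul_pos hea hetp)]
      have hb1' : Real.exp p * t ^ p ≤ (Real.exp t - 1) ^ p := by
        rw [← Real.exp_one_rpow p, ← Real.mul_rpow (Real.exp_pos 1).le ht0.le]
        exact Real.rpow_le_rpow_of_nonpos het (exp_sub_one_le_mul' ht0.le ht1) hp_neg.le
      have hb2 : t / α ≤ Real.exp (t/α) - 1 := by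
        have := Real.add_one_le_exp (t/α); linarith
      have hL : |x| * (c₂ * t ^ (1+p)) ≤ |u| := by
        rw [habs]
        apply mul_le_mul_of_nonneg_left _ hxa.le
        have hrw : c₂ * t ^ (1+p) = (t/α) * (Real.exp p * t ^ p) := by
          rw [Real.rpow_add ht0, Real.rpow_one, hc₂]; ring
        rw [hrw]
        exact mul_le_mul hb2 hb1' (by positivity) hea.le
      have hLpos : 0 < |x| * (c₂ * t ^ (1+p)) := by positivity
      have hRle : R ≤ |x| * (c₂ * t ^ (1+p)) := by
        have h1 : s₀ ^ (1+p) ≤ t ^ (1+p) :=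
          Real.rpow_le_rpow_of_nonpos ht0 hts h1p.le
        have h3 : R ≤ E * (|x| * c₂) := (div_le_iff₀ (by positivity)).1 (le_max_left _ _)
        calc R ≤ E * (|x| * c₂) := h3
        _ = |x| * (c₂ * s₀ ^ (1+p)) := by rw [hs₀pow]; ring
        _ ≤ |x| * (c₂ * t ^ (1+p)) := by
            exact mul_le_mul_of_nonneg_left
              (mul_le_mul_of_nonneg_left h1 hc₂0.le) hxa.le
      have hf : f₁ u ≤ C / (|x| * (c₂ * t ^ (1+p))) ^ (1 + α) := by
        have h4 := htail' u (hRle.trans hL)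
        have h5 : (|x| * (c₂ * t ^ (1+p))) ^ (1+α) ≤ |u| ^ (1+α) :=
          Real.rpow_le_rpow hLpos.le hL hq.le
        exact h4.trans (div_le_div_of_nonneg_left hC.le (Real.rpow_pos_of_pos hLpos _) h5)
      have hb3 : (Real.exp t - 1) ^ p ≤ t ^ p :=
        Real.rpow_le_rpow_of_nonpos ht0 (by have := Real.add_one_le_exp t; linarith) hp_neg.le
      have hb4 : Real.exp (t/α) ≤ Real.exp (1/α) := Real.exp_le_exp.2 (by gcongr)
      have hb5 : Real.exp (-lam * t) ≤ 1 := Real.exp_le_one_iff.2 (by have := mul_pos hlam ht0; linarith)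
      have step : (f₁ u * (Real.exp t - 1) ^ p * Real.exp (t / α)) * Real.exp (-lam * t)
          ≤ ((C / (|x| * (c₂ * t ^ (1+p))) ^ (1 + α)) * t ^ p * Real.exp (1/α)) * 1 := by
        apply mul_le_mul _ hb5 (Real.exp_pos _).le (by positivity)
        apply mul_le_mul _ hb4 (Real.exp_pos _).le (by positivity)
        exact mul_le_mul hf hb3 hetp.le (by positivity)
      refine step.trans (le_of_eq ?_)
      have hden : (|x| * (c₂ * t ^ (1+p))) ^ (1 + α)
          = (|x| * c₂) ^ (1+α) * t ^ ((1+p)*(1+α)) := by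
        rw [show |x| * (c₂ * t ^ (1+p)) = (|x| * c₂) * t ^ (1+p) by ring,
          Real.mul_rpow (by positivity) (Real.rpow_nonneg ht0.le _),
          ← Real.rpow_mul ht0.le]
      have hexp : -α = p - (1+p)*(1+α) := by
        rw [hp]; field_simp; ring
      rw [hden, hexp, Real.rpow_sub ht0, hK₁]
      have hd1 : ((|x| * c₂) ^ (1+α)) ≠ 0 := by positivity
      have hd2 : (t ^ ((1+p)*(1+α))) ≠ 0 := by positivity
      field_simp
    -- pointwise bound on middle interval
    have hbound2 : ∀ t ∈ Set.Ioc s₀ 1,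
        (f₁ ((x * Real.exp (t / α) - x) * (Real.exp t - 1) ^ p)
          * (Real.exp t - 1) ^ p * Real.exp (t / α)) * Real.exp (-lam * t)
        ≤ (M * (Real.exp s₀ - 1) ^ p * Real.exp (1/α)) * 1 := by
      intro t ht
      obtain ⟨hts, ht1⟩ := ht
      have ht0 : 0 < t := hs₀0.trans hts
      have hes : 0 < Real.exp s₀ - 1 := sub_pos.2 (one_lt_exp_of_pos' hs₀0)
      have het : 0 < Real.exp t - 1 := sub_pos.2 (one_lt_exp_of_pos' ht0)
      have hb3 : (Real.exp t - 1) ^ p ≤ (Real.exp s₀ - 1) ^ p :=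
        Real.rpow_le_rpow_of_nonpos hes (by
          have := Real.exp_le_exp.2 hts.le; linarith) hp_neg.le
      have hb4 : Real.exp (t/α) ≤ Real.exp (1/α) := Real.exp_le_exp.2 (by gcongr)
      have hb5 : Real.exp (-lam * t) ≤ 1 := Real.exp_le_one_iff.2 (by have := mul_pos hlam ht0; linarith)
      apply mul_le_mul _ hb5 (Real.exp_pos _).le (by positivity)
      apply mul_le_mul _ hb4 (Real.exp_pos _).le (by positivity)
      exact mul_le_mul (hM _) hb3 (Real.rpow_pos_of_pos het p).le hM0.le
    -- pointwise bound on tail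
    have hbound3 : ∀ t ∈ Set.Ioi (1:ℝ),
        (f₁ ((x * Real.exp (t / α) - x) * (Real.exp t - 1) ^ p)
          * (Real.exp t - 1) ^ p * Real.exp (t / α)) * Real.exp (-lam * t)
        ≤ (M * (1/2:ℝ) ^ p) * Real.exp (-lam * t) := by
      intro t ht
      have ht1 : (1:ℝ) < t := ht
      have ht0 : 0 < t := lt_trans one_pos ht1
      have het : 0 < Real.exp t - 1 := sub_pos.2 (one_lt_exp_of_pos' ht0)
      have hkey : (Real.exp t - 1) ^ p * Real.exp (t/α) = (1 - Real.exp (-t)) ^ p := by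
        have h1 : Real.exp (t/α) = Real.exp (-t) ^ p := by
          rw [← Real.exp_mul]
          congr 1
          rw [hp]; field_simp
        rw [h1, ← Real.mul_rpow het.le (Real.exp_pos _).le]
        congr 1
        rw [Real.exp_neg]
        have := (Real.exp_pos t).ne'
        field_simp
      have hhalf : (1/2:ℝ) ≤ 1 - Real.exp (-t) := by
        have h2 : Real.exp (-t) ≤ Real.exp (-1) := Real.exp_le_exp.2 (by linarith)
        have h2e : (2:ℝ) ≤ Real.exp 1 := by nlinarith [Real.add_one_le_exp 1]
        have h3 : Real.exp (-1) ≤ 1/2 := by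
          rw [Real.exp_neg, show (1/2:ℝ) = 2⁻¹ by norm_num]
          exact inv_anti₀ two_pos h2e
        linarith
      have h4 : (1 - Real.exp (-t)) ^ p ≤ (1/2:ℝ) ^ p :=
        Real.rpow_le_rpow_of_nonpos one_half_pos hhalf hp_neg.le
      calc (f₁ ((x * Real.exp (t / α) - x) * (Real.exp t - 1) ^ p)
            * (Real.exp t - 1) ^ p * Real.exp (t / α)) * Real.exp (-lam * t)
          = (f₁ ((x * Real.exp (t / α) - x) * (Real.exp t - 1) ^ p)
            * ((Real.exp t - 1) ^ p * Real.exp (t / α))) * Real.exp (-lam * t) := by ring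
      _ ≤ (M * (1/2:ℝ) ^ p) * Real.exp (-lam * t) := by
          apply mul_le_mul_of_nonneg_right _ (Real.exp_pos _).le
          exact mul_le_mul (hM _) (hkey.trans_le h4) (by positivity) hM0.le
    -- finiteness of the three pieces
    have hi1 : (∫⁻ t in Set.Ioc (0:ℝ) s₀,
        ENNReal.ofReal ((f₁ ((x * Real.exp (t / α) - x) * (Real.exp t - 1) ^ p)
          * (Real.exp t - 1) ^ p * Real.exp (t / α)) * Real.exp (-lam * t))) ≠ ⊤ := by
      have hle := setLIntegral_mono' (μ := volume) measurableSet_Ioc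
        fun t ht => ENNReal.ofReal_le_ofReal (hbound1 t ht)
      have hIoo : IntegrableOn (fun t : ℝ => t ^ (-α)) (Set.Ioo (0:ℝ) s₀) :=
        (intervalIntegral.integrableOn_Ioo_rpow_iff hs₀0).2 (by linarith)
      have hIoc : IntegrableOn (fun t : ℝ => K₁ * t ^ (-α)) (Set.Ioc (0:ℝ) s₀) := by
        rw [IntegrableOn, ← Measure.restrict_congr_set Ioo_ae_eq_Ioc]
        exact hIoo.const_mul K₁
      exact (lt_of_le_of_lt hle hIoc.setLIntegral_lt_top).ne
    have hi2 : (∫⁻ t in Set.Ioc s₀ 1,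
        ENNReal.ofReal ((f₁ ((x * Real.exp (t / α) - x) * (Real.exp t - 1) ^ p)
          * (Real.exp t - 1) ^ p * Real.exp (t / α)) * Real.exp (-lam * t))) ≠ ⊤ := by
      have hle := setLIntegral_mono' (μ := volume) measurableSet_Ioc
        fun t ht => ENNReal.ofReal_le_ofReal (hbound2 t ht)
      refine (lt_of_le_of_lt hle ?_).ne
      rw [setLIntegral_const]
      exact ENNReal.mul_lt_top ENNReal.ofReal_lt_top measure_Ioc_lt_top
    have hi3 : (∫⁻ t in Set.Ioi (1:ℝ),
        ENNReal.ofReal ((f₁ ((x * Real.exp (t / α) - x) * (Real.exp t - 1) ^ p)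
          * (Real.exp t - 1) ^ p * Real.exp (t / α)) * Real.exp (-lam * t))) ≠ ⊤ := by
      have hle := setLIntegral_mono' (μ := volume) measurableSet_Ioi
        fun t ht => ENNReal.ofReal_le_ofReal (hbound3 t ht)
      have hInt : IntegrableOn (fun t : ℝ => (M * (1/2:ℝ) ^ p) * Real.exp (-lam * t))
          (Set.Ioi (1:ℝ)) := (exp_neg_integrableOn_Ioi 1 hlam).const_mul _
      exact (lt_of_le_of_lt hle hInt.setLIntegral_lt_top).ne
    rw [← Set.Ioc_union_Ioi_eq_Ioi hs₀0.le,
      lintegral_union measurableSet_Ioi Set.Ioc_disjoint_Ioi_same,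
      ← Set.Ioc_union_Ioi_eq_Ioi hs₀1,
      lintegral_union measurableSet_Ioi Set.Ioc_disjoint_Ioi_same]
    exact ENNReal.add_ne_top.2 ⟨hi1, ENNReal.add_ne_top.2 ⟨hi2, hi3⟩⟩
  · -- infinite part
    set c : ℝ := f₁ 0 * Real.exp p * Real.exp (-lam) with hc
    have hc_pos : 0 < c := by
      have := hpos 0; positivity
    have hbound : ∀ t ∈ Set.Ioc (0:ℝ) 1,
        c * t ^ p ≤ (f₁ 0 * (Real.exp t - 1) ^ p * Real.exp (t / α)) * Real.exp (-lam * t) := by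
      intro t ht
      have ht0 := ht.1
      have ht1 := ht.2
      have het : 0 < Real.exp t - 1 := sub_pos.2 (one_lt_exp_of_pos' ht0)
      have hE1 : Real.exp p * t ^ p ≤ (Real.exp t - 1) ^ p := by
        have h2 : (Real.exp 1 * t) ^ p ≤ (Real.exp t - 1) ^ p :=
          Real.rpow_le_rpow_of_nonpos het (exp_sub_one_le_mul' ht0.le ht1) hp_neg.le
        calc Real.exp p * t ^ p = (Real.exp 1 * t) ^ p := by
              rw [Real.mul_rpow (Real.exp_pos 1).le ht0.le, Real.exp_one_rpow]
        _ ≤ _ := h2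
      have hE2 : Real.exp (-lam) ≤ Real.exp (t / α) * Real.exp (-lam * t) := by
        rw [← Real.exp_add]
        apply Real.exp_le_exp.2
        have h3 : 0 ≤ t / α := by positivity
        nlinarith
      have hfe : 0 ≤ f₁ 0 * (Real.exp t - 1) ^ p :=
        mul_nonneg (hpos 0).le (Real.rpow_nonneg het.le _)
      calc c * t ^ p = (f₁ 0 * Real.exp (-lam)) * (Real.exp p * t ^ p) := by rw [hc]; ring
      _ ≤ (f₁ 0 * Real.exp (-lam)) * ((Real.exp t - 1) ^ p) := by
          apply mul_le_mul_of_nonneg_left hE1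
          have := hpos 0; positivity
      _ = (f₁ 0 * (Real.exp t - 1) ^ p) * Real.exp (-lam) := by ring
      _ ≤ (f₁ 0 * (Real.exp t - 1) ^ p) * (Real.exp (t / α) * Real.exp (-lam * t)) :=
          mul_le_mul_of_nonneg_left hE2 hfe
      _ = (f₁ 0 * (Real.exp t - 1) ^ p * Real.exp (t / α)) * Real.exp (-lam * t) := by ring
    have hmono : ∫⁻ t in Set.Ioc (0:ℝ) 1, ENNReal.ofReal (c * t ^ p)
        ≤ ∫⁻ t in Set.Ioi (0:ℝ),
          ENNReal.ofReal ((f₁ 0 * (Real.exp t - 1) ^ p * Real.exp (t / α))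
            * Real.exp (-lam * t)) := by
      refine le_trans (setLIntegral_mono' measurableSet_Ioc fun t ht =>
        ENNReal.ofReal_le_ofReal (hbound t ht)) ?_
      exact lintegral_mono_set Set.Ioc_subset_Ioi_self
    have hconst : ∫⁻ t in Set.Ioc (0:ℝ) 1, ENNReal.ofReal (c * t ^ p) = ⊤ := by
      simp_rw [ENNReal.ofReal_mul hc_pos.le]
      rw [lintegral_const_mul' _ _ ENNReal.ofReal_ne_top, rpow_lintegral_top' hp_le.le,
        ENNReal.mul_top]
      simp [ENNReal.ofReal_eq_zero, not_le, hc_pos]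
    rw [eq_top_iff]
    calc (⊤ : ENNReal) = ∫⁻ t in Set.Ioc (0:ℝ) 1, ENNReal.ofReal (c * t ^ p) := hconst.symm
    _ ≤ _ := hmono
end
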